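/- Let F = a x^r y^{s+α} + b x^{r+α} y^s with a,b ∈ ℂ nonzero, 0 ≤ r ≤ s, α ≥ 1, and write r = qα + j with 0 ≤ j < α. If r + α > s, j = 0, r = s, and α > 1, then rk(F) = s + 2. -/

import Mathlib

open MvPolynomial Finset

noncomputable def lin (c : ℂ × ℂ) : MvPolynomial (Fin 2) ℂ :=
  C c.1 * X 0 + C c.2 * X 1

noncomputable def wmk (d k : ℕ) : Fin 2 →₀ ℕ := Finsupp.single 0 k + Finsupp.single 1 (d - k)

lemma wmk_fst (d k : ℕ) : wmk d k 0 = k := by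
  simp [wmk, Finsupp.single_apply]

lemma wmk_inj {d k k' : ℕ} (h : wmk d k = wmk d k') : k = k' := by
  have := congrArg (fun f => f 0) h
  simpa [wmk_fst] using this

lemma lin_pow (c : ℂ × ℂ) (d : ℕ) :
    lin c ^ d = ∑ k ∈ Finset.range (d+1),
      monomial (wmk d k) ((d.choose k : ℂ) * (c.1^k * c.2^(d-k))) := by
  rw [lin, add_pow]
  refine Finset.sum_congr rfl fun k hk => ?_
  rw [mul_pow, mul_pow, ← C_pow, ← C_pow, X_pow_eq_monomial, X_pow_eq_monomial,
    C_mul_monomial, C_mul_monomial, monomial_mul,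
    ← map_natCast (C : ℂ →+* MvPolynomial (Fin 2) ℂ) (d.choose k), mul_comm _ ((C : ℂ →+* _) _),
    C_mul_monomial]
  rw [wmk]
  congr 1
  ring

lemma sum_lin_pow {m d : ℕ} (a : Fin m → ℂ) (c : Fin m → ℂ × ℂ) :
    ∑ i, C (a i) * lin (c i) ^ d
      = ∑ k ∈ Finset.range (d+1),
          monomial (wmk d k) ((d.choose k : ℂ) * ∑ i, a i * ((c i).1^k * (c i).2^(d-k))) := by
  have h1 : ∀ i : Fin m, C (a i) * lin (c i) ^ d
      = ∑ k ∈ Finset.range (d+1),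
          monomial (wmk d k) ((d.choose k : ℂ) * (a i * ((c i).1^k * (c i).2^(d-k)))) := by
    intro i
    rw [lin_pow, Finset.mul_sum]
    refine Finset.sum_congr rfl fun k _ => ?_
    rw [C_mul_monomial]
    congr 1
    ring
  rw [Finset.sum_congr rfl (fun i _ => h1 i), Finset.sum_comm]
  refine Finset.sum_congr rfl fun k _ => ?_
  rw [Finset.mul_sum, ← map_sum]

lemma coeff_wmk_sum {d k : ℕ} (hk : k ≤ d) (g : ℕ → ℂ) :
    coeff (wmk d k) (∑ k' ∈ Finset.range (d+1), monomial (wmk d k') (g k')) = g k := by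
  rw [coeff_sum]
  have h1 : ∀ k' ∈ Finset.range (d+1),
      coeff (wmk d k) (monomial (wmk d k') (g k')) = if k' = k then g k' else 0 := by
    intro k' _
    rw [coeff_monomial]
    by_cases h : k' = k
    · simp [h]
    · rw [if_neg h, if_neg (fun hc => h (wmk_inj hc))]
  rw [Finset.sum_congr rfl h1, Finset.sum_ite_eq' (Finset.range (d+1)) k g,
    if_pos (Finset.mem_range.2 (by omega))]

lemma F_repr (a b : ℂ) (s α d : ℕ) (hd : d = s + s + α) :
    C a * X (0 : Fin 2) ^ s * X 1 ^ (s+α) + C b * X (0 : Fin 2) ^ (s+α) * X 1 ^ s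
      = ∑ k ∈ Finset.range (d+1), monomial (wmk d k)
          ((if k = s then a else 0) + (if k = s + α then b else 0)) := by
  have hmon : ∀ (u v : ℕ) (x : ℂ), C x * X (0 : Fin 2) ^ u * X 1 ^ v
      = monomial (Finsupp.single 0 u + Finsupp.single 1 v) x := by
    intro u v x
    rw [X_pow_eq_monomial, X_pow_eq_monomial, C_mul_monomial, monomial_mul]
    congr 1
    ring
  have hsplit : ∀ k' ∈ Finset.range (d+1), monomial (wmk d k')
        ((if k' = s then a else 0) + (if k' = s + α then b else 0))
      = (if k' = s then monomial (wmk d s) a else 0)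
        + (if k' = s + α then monomial (wmk d (s+α)) b else 0) := by
    intro k' _
    rw [map_add]
    congr 1
    · by_cases h : k' = s
      · simp [h]
      · simp [h]
    · by_cases h : k' = s + α
      · simp [h]
      · simp [h]
  rw [Finset.sum_congr rfl hsplit, Finset.sum_add_distrib,
    Finset.sum_ite_eq' (Finset.range (d+1)) s (fun _ => monomial (wmk d s) a),
    Finset.sum_ite_eq' (Finset.range (d+1)) (s+α) (fun _ => monomial (wmk d (s+α)) b),
    if_pos (Finset.mem_range.2 (by omega)), if_pos (Finset.mem_range.2 (by omega))]
  rw [hmon, hmon, wmk, wmk, show d - s = s + α by omega, show d - (s+α) = s by omega]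

lemma geom_sum_root {n : ℕ} {η : ℂ} (hn : 0 < n) (hη : IsPrimitiveRoot η n) (m : ℕ) :
    ∑ p ∈ Finset.range n, η ^ (p * m) = if n ∣ m then (n : ℂ) else 0 := by
  have hpow : ∀ p ∈ Finset.range n, η ^ (p * m) = (η ^ m) ^ p := by
    intro p _
    rw [← pow_mul, mul_comm]
  rw [Finset.sum_congr rfl hpow]
  by_cases h : n ∣ m
  · rw [if_pos h]
    have h1 : η ^ m = 1 := (hη.pow_eq_one_iff_dvd m).2 h
    simp [h1]
  · rw [if_neg h]
    have hx : η ^ m ≠ 1 := fun hx => h ((hη.pow_eq_one_iff_dvd m).1 hx)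
    have hxn : (η ^ m) ^ n = 1 := by
      rw [← pow_mul, mul_comm, pow_mul, hη.pow_eq_one, one_pow]
    rw [geom_sum_eq hx, hxn]
    simp

lemma annihilator_exists (m : ℕ) (pts : Fin m → ℂ × ℂ) :
    ∃ (κ : ℕ → ℂ) (r0 : ℕ), r0 ≤ m ∧ κ r0 ≠ 0 ∧ (∀ r, r0 < r → κ r = 0) ∧
      ∀ i, ∑ r ∈ Finset.range (m+1), κ r * ((pts i).1 ^ r * (pts i).2 ^ (m - r)) = 0 := by
  induction m with
  | zero =>
    refine ⟨fun r => if r = 0 then 1 else 0, 0, le_refl 0, by simp, ?_, fun i => i.elim0⟩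
    intro r hr
    show (if r = 0 then (1:ℂ) else 0) = 0
    rw [if_neg (by omega)]
  | succ m ih =>
    obtain ⟨κ, r0, hr0m, hr0, hsupp, hvan⟩ := ih (fun i => pts i.succ)
    obtain ⟨u, t, hut, hpt⟩ : ∃ u t : ℂ, (u ≠ 0 ∨ (u = 0 ∧ t ≠ 0)) ∧
        u * (pts 0).1 + t * (pts 0).2 = 0 := by
      by_cases h1 : (pts 0).1 = 0 ∧ (pts 0).2 = 0
      · exact ⟨1, 0, Or.inl one_ne_zero, by rw [h1.1, h1.2]; ring⟩
      · refine ⟨(pts 0).2, -(pts 0).1, ?_, by ring⟩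
        by_cases h2 : (pts 0).2 = 0
        · exact Or.inr ⟨h2, by simpa [h2] using h1⟩
        · exact Or.inl h2
    set κ' : ℕ → ℂ := fun r => u * (if r = 0 then 0 else κ (r-1)) + t * κ r with hκ'
    have hsum : ∀ i : Fin (m+1),
        ∑ r ∈ Finset.range (m+1+1), κ' r * ((pts i).1 ^ r * (pts i).2 ^ (m+1-r))
          = (u * (pts i).1 + t * (pts i).2)
            * ∑ r ∈ Finset.range (m+1), κ r * ((pts i).1 ^ r * (pts i).2 ^ (m-r)) := by
      intro i
      set c1 := (pts i).1
      set c2 := (pts i).2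
      have e1 : ∑ r ∈ Finset.range (m+1+1),
          (u * (if r = 0 then 0 else κ (r-1))) * (c1 ^ r * c2 ^ (m+1-r))
          = u * c1 * ∑ r ∈ Finset.range (m+1), κ r * (c1 ^ r * c2 ^ (m-r)) := by
        rw [Finset.sum_range_succ']
        have h0 : (u * (if (0:ℕ) = 0 then 0 else κ (0-1))) * (c1 ^ 0 * c2 ^ (m+1-0)) = 0 := by
          simp
        rw [h0, add_zero, Finset.mul_sum]
        refine Finset.sum_congr rfl fun r hr => ?_
        rw [if_neg (Nat.succ_ne_zero r), Nat.add_sub_cancel,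
          show m + 1 - (r+1) = m - r by omega, pow_succ]
        ring
      have e2 : ∑ r ∈ Finset.range (m+1+1), (t * κ r) * (c1 ^ r * c2 ^ (m+1-r))
          = t * c2 * ∑ r ∈ Finset.range (m+1), κ r * (c1 ^ r * c2 ^ (m-r)) := by
        rw [Finset.sum_range_succ, hsupp (m+1) (by omega)]
        simp only [mul_zero, zero_mul, add_zero, Finset.mul_sum]
        refine Finset.sum_congr rfl fun r hr => ?_
        rw [show m + 1 - r = (m - r) + 1 by exact Nat.succ_sub (by simpa using Nat.lt_succ_iff.1 (Finset.mem_range.1 hr)), pow_succ]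
        ring
      calc ∑ r ∈ Finset.range (m+1+1), κ' r * (c1 ^ r * c2 ^ (m+1-r))
          = ∑ r ∈ Finset.range (m+1+1), ((u * (if r = 0 then 0 else κ (r-1))) * (c1 ^ r * c2 ^ (m+1-r))
              + (t * κ r) * (c1 ^ r * c2 ^ (m+1-r))) := by
            refine Finset.sum_congr rfl fun r _ => ?_
            rw [hκ']
            ring
        _ = u * c1 * (∑ r ∈ Finset.range (m+1), κ r * (c1 ^ r * c2 ^ (m-r)))
              + t * c2 * (∑ r ∈ Finset.range (m+1), κ r * (c1 ^ r * c2 ^ (m-r))) := by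
            rw [Finset.sum_add_distrib, e1, e2]
        _ = _ := by ring
    have hvan' : ∀ i : Fin (m+1),
        ∑ r ∈ Finset.range (m+1+1), κ' r * ((pts i).1 ^ r * (pts i).2 ^ (m+1-r)) = 0 := by
      intro i
      induction i using Fin.cases with
      | zero => rw [hsum 0, hpt, zero_mul]
      | succ j => rw [hsum j.succ, hvan j, mul_zero]
    rcases hut with hu | ⟨hu, ht⟩
    · refine ⟨κ', r0 + 1, by omega, ?_, ?_, hvan'⟩
      · simp only [hκ']
        rw [if_neg (by omega), Nat.add_sub_cancel, hsupp (r0+1) (by omega)]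
        simpa using mul_ne_zero hu hr0
      · intro r hr
        simp only [hκ']
        rw [hsupp r (by omega), if_neg (by omega), hsupp (r-1) (by omega)]
        ring
    · refine ⟨κ', r0, by omega, ?_, ?_, hvan'⟩
      · simp only [hκ', hu]
        simpa using mul_ne_zero ht hr0
      · intro r hr
        simp only [hκ', hu, hsupp r hr]
        ring

lemma sum_ite_shift (m : ℕ) (κ : ℕ → ℂ) (hκ : ∀ r, m < r → κ r = 0) (j tgt : ℕ) (A : ℂ) :
    ∑ r ∈ Finset.range (m+1), κ r * (if j + r = tgt then A else 0)
      = if j ≤ tgt then κ (tgt - j) * A else 0 := by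
  by_cases hj : j ≤ tgt
  · rw [if_pos hj]
    by_cases hle : tgt - j ≤ m
    · rw [Finset.sum_eq_single (tgt - j)]
      · rw [if_pos (by omega)]
      · intro r hr hne
        rw [if_neg (by simp only [Finset.mem_range] at hr; omega), mul_zero]
      · intro h
        exact absurd (Finset.mem_range.2 (by omega)) h
    · rw [hκ _ (by omega), zero_mul]
      refine Finset.sum_eq_zero fun r hr => ?_
      rw [if_neg (by simp only [Finset.mem_range] at hr; omega), mul_zero]
  · rw [if_neg hj]
    refine Finset.sum_eq_zero fun r hr => ?_
    rw [if_neg (by omega), mul_zero]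

lemma chain_zero (κ : ℕ → ℂ) (A' B' : ℂ) (hA : A' ≠ 0) (hB : B' ≠ 0)
    (s α q m : ℕ) (hs : s = q * α) (hα : 2 ≤ α) (hm : m ≤ s + 1)
    (hκ : ∀ r, m < r → κ r = 0)
    (hE : ∀ j, j ≤ (s + s + α) - m →
      (if j ≤ s then κ (s - j) * A' else 0) + (if j ≤ s + α then κ (s + α - j) * B' else 0) = 0) :
    ∀ r, κ r = 0 := by
  have h1 : κ 1 = 0 := by
    have h := hE (s + α - 1) (by omega)
    rw [if_neg (by omega), if_pos (by omega), show s + α - (s + α - 1) = 1 by omega,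
      zero_add] at h
    exact (mul_eq_zero.1 h).resolve_right hB
  have h2 : ∀ i, i ≤ q → κ (1 + i * α) = 0 := by
    intro i
    induction i with
    | zero => intro _; simpa using h1
    | succ i ih =>
      intro hiq
      have e1 : (i+1) * α = i * α + α := by rw [Nat.succ_mul]
      have e2 : (i+1) * α ≤ q * α := Nat.mul_le_mul_right α hiq
      have hle : 1 + i * α ≤ s := by omega
      have h := hE (s - (1 + i * α)) (by omega)
      rw [if_pos (by omega), if_pos (by omega),
        show s - (s - (1 + i * α)) = 1 + i * α by omega,
        show s + α - (s - (1 + i * α)) = 1 + (i+1) * α by omega] at h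
      rw [ih (by omega), zero_mul, zero_add] at h
      exact (mul_eq_zero.1 h).resolve_right hB
  have hs1 : κ (s + 1) = 0 := by
    have h := h2 q le_rfl
    rwa [show 1 + q * α = s + 1 by omega] at h
  have h3 : ∀ t, t ≤ s → κ (s - t) = 0 := by
    intro t
    induction t using Nat.strong_induction_on with
    | _ t ih =>
      intro hts
      have h := hE t (by omega)
      rw [if_pos hts, if_pos (by omega)] at h
      have hupper : κ (s + α - t) = 0 := by
        rcases lt_trichotomy t (α - 1) with hc | hc | hc
        · exact hκ _ (by omega)
        · rw [show s + α - t = s + 1 by omega]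
          exact hs1
        · rw [show s + α - t = s - (t - α) by omega]
          exact ih (t - α) (by omega) (by omega)
      rw [hupper, zero_mul, add_zero] at h
      exact (mul_eq_zero.1 h).resolve_right hA
  intro r
  rcases le_or_gt r m with hr | hr
  · rcases le_or_gt r s with hrs | hrs
    · have h := h3 (s - r) (by omega)
      rwa [show s - (s - r) = r by omega] at h
    · rw [show r = s + 1 by omega]
      exact hs1
  · exact hκ r hr

lemma filter_dvd_image (α' q' : ℕ) :
    (Finset.range (α' * (q'+1))).filter (fun p => (q'+1) ∣ p)
      = (Finset.range α').image (fun m => m * (q'+1)) := by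
  ext p
  simp only [Finset.mem_filter, Finset.mem_range, Finset.mem_image]
  constructor
  · rintro ⟨hlt, c, rfl⟩
    have h2 : c * (q'+1) < α' * (q'+1) := by
      rw [Nat.mul_comm c (q'+1)]
      exact hlt
    exact ⟨c, Nat.lt_of_mul_lt_mul_right h2, Nat.mul_comm c (q'+1)⟩
  · rintro ⟨c, hc, rfl⟩
    exact ⟨mul_lt_mul_of_pos_right hc (by omega), ⟨c, Nat.mul_comm c (q'+1)⟩⟩

lemma mem_decomp (a b : ℂ) (ha : a ≠ 0) (hb : b ≠ 0) (s α q : ℕ) (hα : 2 ≤ α)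
    (hs : s = q * α) :
    ∃ (A : Fin (s+2) → ℂ) (c : Fin (s+2) → ℂ × ℂ),
      C a * X (0 : Fin 2) ^ s * X 1 ^ (s+α) + C b * X (0 : Fin 2) ^ (s+α) * X 1 ^ s
        = ∑ i, C (A i) * lin (c i) ^ (s + s + α) := by
  classical
  set d := s + s + α with hd
  set n := s + α with hn
  have hn0 : 0 < n := by omega
  have hna : n = α * (q + 1) := by rw [hn, hs]; ring
  obtain ⟨v, hv⟩ : ∃ v : ℂ, v ^ α = -b / a := IsAlgClosed.exists_pow_nat_eq (-b / a) (by omega)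
  have hba : (-b / a : ℂ) ≠ 0 := div_ne_zero (neg_ne_zero.2 hb) ha
  have hvne : v ≠ 0 := by
    intro h
    rw [h, zero_pow (by omega)] at hv
    exact hba hv.symm
  set η := Complex.exp (2 * Real.pi * Complex.I / n) with hηdef
  have hη : IsPrimitiveRoot η n := Complex.isPrimitiveRoot_exp n (by omega)
  set Fs : ℂ := a / (d.choose s : ℂ) with hFs
  set cc : ℂ := v ^ n with hcc
  set K : ℂ := Fs * v ^ α / (cc * n) with hK
  set w : ℕ → ℂ := fun p => K * (η ^ (p * α) - 1) with hw
  set S : ℕ → ℂ := fun k => ∑ p ∈ Finset.range n, w p * (v * η ^ p) ^ k with hS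
  set Bf : ℕ → ℂ := fun k => (if k = s then a else 0) + (if k = s + α then b else 0) with hBf
  -- enumeration of non-excluded roots
  set T : Finset ℕ := (Finset.range n).filter (fun p => ¬ (q+1) ∣ p) with hT
  have h2 : ((Finset.range n).filter (fun p => (q+1) ∣ p)).card = α := by
    rw [hna, filter_dvd_image, Finset.card_image_of_injective _
      (fun x y h => Nat.eq_of_mul_eq_mul_right (by omega) h), Finset.card_range]
  have hTcard : T.card = s := by
    have h1 : (((Finset.range n).filter (fun p => (q+1) ∣ p)).card : ℕ)
        + ((Finset.range n).filter (fun p => ¬ (q+1) ∣ p)).card = n := by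
      rw [Finset.card_filter_add_card_filter_not, Finset.card_range]
    rw [hT]
    omega
  have eqv : { x // x ∈ T } ≃ Fin s := T.equivFinOfCardEq hTcard
  set σ : Fin s → ℕ := fun i => ((eqv.symm i : { x // x ∈ T }) : ℕ) with hσ
  have hsumT : ∀ g : ℕ → ℂ, ∑ i : Fin s, g (σ i) = ∑ p ∈ T, g p := by
    intro g
    rw [← Finset.sum_coe_sort T g]
    exact Equiv.sum_comp eqv.symm (fun x : { x // x ∈ T } => g ↑x)
  have hwdvd : ∀ p, (q+1) ∣ p → w p = 0 := by
    rintro p ⟨c, rfl⟩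
    have : η ^ ((q+1) * c * α) = 1 := by
      rw [(hη.pow_eq_one_iff_dvd _).2 ⟨c, by rw [hna]; ring⟩]
    rw [hw]
    simp only [this, sub_self, mul_zero]
  have hSfin : ∀ k, ∑ i : Fin s, w (σ i) * (v * η ^ (σ i)) ^ k = S k := by
    intro k
    rw [hsumT (fun p => w p * (v * η ^ p) ^ k)]
    have hsplit := Finset.sum_filter_add_sum_filter_not (Finset.range n)
      (fun p => (q+1) ∣ p) (fun p => w p * (v * η ^ p) ^ k)
    have hzero : ∑ p ∈ (Finset.range n).filter (fun p => (q+1) ∣ p),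
        w p * (v * η ^ p) ^ k = 0 := by
      refine Finset.sum_eq_zero fun p hp => ?_
      rw [hwdvd p (Finset.mem_filter.1 hp).2, zero_mul]
    rw [← hT] at hsplit
    show ∑ p ∈ T, w p * (v * η ^ p) ^ k = ∑ p ∈ Finset.range n, w p * (v * η ^ p) ^ k
    rw [← hsplit, hzero, zero_add]
  -- value of S k
  have hSval : ∀ k, S k = K * v ^ k *
      ((if n ∣ α + k then (n:ℂ) else 0) - (if n ∣ k then (n:ℂ) else 0)) := by
    intro k
    rw [hS]
    calc ∑ p ∈ Finset.range n, w p * (v * η ^ p) ^ k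
        = ∑ p ∈ Finset.range n, K * v ^ k * (η ^ (p * (α + k)) - η ^ (p * k)) := by
          refine Finset.sum_congr rfl fun p _ => ?_
          rw [hw, mul_pow, ← pow_mul]
          have : η ^ (p * (α + k)) = η ^ (p * α) * η ^ (p * k) := by
            rw [← pow_add, Nat.mul_add]
          rw [this]
          ring
      _ = K * v ^ k * ((∑ p ∈ Finset.range n, η ^ (p * (α + k)))
            - ∑ p ∈ Finset.range n, η ^ (p * k)) := by
          rw [← Finset.sum_sub_distrib, Finset.mul_sum]
      _ = _ := by rw [geom_sum_root hn0 hη, geom_sum_root hn0 hη]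
  set lam : ℂ := (if d = s + α then b else 0) - S d with hlam
  set mu : ℂ := (if (0:ℕ) = s then a else 0) - S 0 with hmu
  refine ⟨Fin.cons lam (Fin.cons mu (fun i => w (σ i))),
          Fin.cons (1,0) (Fin.cons (0,1) (fun i => (v * η ^ (σ i), 1))), ?_⟩
  rw [F_repr a b s α d hd, sum_lin_pow]
  refine Finset.sum_congr rfl fun k hk => ?_
  have hk' : k ≤ d := by
    have := Finset.mem_range.1 hk
    omega
  congr 1
  simp only [Fin.sum_univ_succ, Fin.cons_zero, Fin.cons_succ, one_pow, mul_one, one_mul]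
  rw [hSfin k]
  by_cases hk0 : k = 0
  · rw [hk0]
    rw [if_neg (show ¬ (0:ℕ) = s + α by omega), Nat.sub_zero, pow_zero,
      zero_pow (show d ≠ 0 by omega), Nat.choose_zero_right, hmu]
    push_cast
    ring
  · by_cases hkd : k = d
    · rw [hkd, Nat.sub_self, pow_zero, zero_pow (show d ≠ 0 by omega),
        if_neg (show ¬ d = s by omega), Nat.choose_self, hlam]
      push_cast
      ring
    · -- interior case
      rw [zero_pow (show d - k ≠ 0 by omega), zero_pow hk0, hSval k]
      have hcast : ((d.choose s : ℕ) : ℂ) ≠ 0 :=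
        Nat.cast_ne_zero.2 (Nat.choose_pos (by omega)).ne'
      have hncast : ((n : ℕ) : ℂ) ≠ 0 := Nat.cast_ne_zero.2 (by omega)
      have hccne : v ^ n ≠ 0 := pow_ne_zero _ hvne
      have hva : v ^ α * a = -b := by
        rw [hv]
        field_simp
      have hvn : v ^ n = v ^ s * v ^ α := by rw [hn, pow_add]
      by_cases h1 : n ∣ k
      · obtain ⟨c, hc⟩ := h1
        have hkn : k = n := by
          rcases Nat.lt_or_ge c 2 with hcl | hcg
          · interval_cases c
            · simp at hc
              omega
            · omega
          · exfalso
            have h3 : n * 2 ≤ n * c := Nat.mul_le_mul_left n hcg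
            omega
        have hs0 : 0 < s := by omega
        have h2 : ¬ n ∣ (α + n) := by
          intro hdvd
          have h3 : n ∣ (α + n - n) := Nat.dvd_sub hdvd (dvd_refl n)
          rw [show α + n - n = α by omega] at h3
          have := Nat.le_of_dvd (by omega) h3
          omega
        rw [hkn, if_neg (show ¬ n = s by omega), if_pos (show n = s + α from hn),
          if_neg h2, if_pos (dvd_refl n)]
        rw [show (d.choose n) = d.choose s by
          rw [show n = d - s by omega, Nat.choose_symm (by omega)],
          hK, hFs, hcc, hvn]
        field_simp
        linear_combination (n : ℂ) * hva
      · by_cases h2 : n ∣ (α + k)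
        · obtain ⟨c, hc⟩ := h2
          have hks : k = s := by
            rcases Nat.lt_or_ge c 2 with hcl | hcg
            · interval_cases c
              · simp at hc
                omega
              · omega
            · exfalso
              have h3 : n * 2 ≤ n * c := Nat.mul_le_mul_left n hcg
              omega
          rw [hks] at h1
          rw [hks, if_pos rfl, if_neg (show ¬ s = s + α by omega),
            if_pos (show n ∣ α + s from ⟨1, by omega⟩), if_neg h1,
            hK, hFs, hcc, hvn]
          field_simp
          ring
        · rw [if_neg h1, if_neg h2, if_neg (show ¬ k = s by
              intro h
              exact h2 ⟨1, by omega⟩),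
            if_neg (show ¬ k = s + α by
              intro h
              exact h1 ⟨1, by omega⟩)]
          ring

noncomputable def waringRank (d : ℕ) (F : MvPolynomial (Fin 2) ℂ) : ℕ :=
  sInf {r | ∃ (a : Fin r → ℂ) (c : Fin r → ℂ × ℂ), F = ∑ i, C (a i) * lin (c i) ^ d}

theorem waring_rank_binomial_case_j0_req_s (a b : ℂ) (ha : a ≠ 0) (hb : b ≠ 0)
    (r s α q j : ℕ) (hrs : r ≤ s) (hα : 1 ≤ α)
    (hqj : r = q * α + j) (hj : j < α)
    (hdelta : s < r + α) (hj0 : j = 0) (hre : r = s) (hα1 : 1 < α) :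
    waringRank (r + s + α)
      (C a * X (0 : Fin 2) ^ r * X 1 ^ (s + α) + C b * X (0 : Fin 2) ^ (r + α) * X 1 ^ s)
      = s + 2 := by
  subst hj0
  subst hre
  have hα2 : 2 ≤ α := hα1
  have hsq : r = q * α := by omega
  set d := r + r + α with hd
  obtain ⟨A2, c2, hdec⟩ := mem_decomp a b ha hb r α q hα2 hsq
  have hmem : (r + 2) ∈ {m | ∃ (A : Fin m → ℂ) (c : Fin m → ℂ × ℂ),
      C a * X (0 : Fin 2) ^ r * X 1 ^ (r + α) + C b * X (0 : Fin 2) ^ (r + α) * X 1 ^ r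
        = ∑ i, C (A i) * lin (c i) ^ d} := ⟨A2, c2, hdec⟩
  apply le_antisymm
  · exact Nat.sInf_le hmem
  · refine le_csInf ⟨r + 2, hmem⟩ ?_
    rintro m ⟨A, cp, hFm⟩
    by_contra hlt
    push_neg at hlt
    have hm : m ≤ r + 1 := by omega
    have hrepr := F_repr a b r α d hd
    have hslp := sum_lin_pow (d := d) A cp
    have hcoeff : ∀ k, k ≤ d →
        ((if k = r then a else 0) + (if k = r + α then b else 0))
          = (d.choose k : ℂ) * ∑ i, A i * ((cp i).1 ^ k * (cp i).2 ^ (d - k)) := by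
      intro k hk
      have h2 : (∑ k' ∈ Finset.range (d+1), monomial (wmk d k')
            ((if k' = r then a else 0) + (if k' = r + α then b else 0)))
          = ∑ k' ∈ Finset.range (d+1), monomial (wmk d k')
              ((d.choose k' : ℂ) * ∑ i, A i * ((cp i).1 ^ k' * (cp i).2 ^ (d - k'))) := by
        rw [← hrepr, ← hslp]
        exact hFm
      have h3 := congrArg (coeff (wmk d k)) h2
      rwa [coeff_wmk_sum hk, coeff_wmk_sum hk] at h3
    set A' : ℂ := a / (d.choose r : ℂ) with hA'
    set B' : ℂ := b / (d.choose (r + α) : ℂ) with hB'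
    have hchr : ((d.choose r : ℕ) : ℂ) ≠ 0 :=
      Nat.cast_ne_zero.2 (Nat.choose_pos (by omega)).ne'
    have hchra : ((d.choose (r + α) : ℕ) : ℂ) ≠ 0 :=
      Nat.cast_ne_zero.2 (Nat.choose_pos (by omega)).ne'
    have hAne : A' ≠ 0 := div_ne_zero ha hchr
    have hBne : B' ≠ 0 := div_ne_zero hb hchra
    have hv : ∀ k, k ≤ d → (∑ i, A i * ((cp i).1 ^ k * (cp i).2 ^ (d - k)))
        = (if k = r then A' else 0) + (if k = r + α then B' else 0) := by
      intro k hk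
      have h := hcoeff k hk
      by_cases h1 : k = r
      · rw [h1] at h ⊢
        rw [if_pos rfl, if_neg (show ¬ r = r + α by omega)] at h ⊢
        rw [hA', add_zero, eq_div_iff hchr]
        linear_combination (-1 : ℂ) * h
      · by_cases h2 : k = r + α
        · rw [h2] at h ⊢
          rw [if_neg (show ¬ r + α = r by omega), if_pos rfl, zero_add] at h ⊢
          rw [hB', eq_div_iff hchra]
          linear_combination (-1 : ℂ) * h
        · rw [if_neg h1, if_neg h2] at h ⊢
          rw [add_zero] at h ⊢
          have hch : ((d.choose k : ℕ) : ℂ) ≠ 0 :=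
            Nat.cast_ne_zero.2 (Nat.choose_pos hk).ne'
          rcases mul_eq_zero.1 h.symm with h' | h'
          · exact absurd h' hch
          · exact h'
    obtain ⟨κ, r0, hr0m, hr0ne, hsupp, hvan⟩ := annihilator_exists m cp
    have hκm : ∀ rr, m < rr → κ rr = 0 := fun rr h => hsupp rr (by omega)
    have hwin : ∀ jj, jj ≤ (r + r + α) - m →
        (if jj ≤ r then κ (r - jj) * A' else 0)
          + (if jj ≤ r + α then κ (r + α - jj) * B' else 0) = 0 := by
      intro jj hj2
      have hper : ∀ i : Fin m, ∑ rr ∈ Finset.range (m+1),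
          κ rr * (A i * ((cp i).1 ^ (jj + rr) * (cp i).2 ^ (d - (jj + rr)))) = 0 := by
        intro i
        have e : ∀ rr ∈ Finset.range (m+1),
            κ rr * (A i * ((cp i).1 ^ (jj + rr) * (cp i).2 ^ (d - (jj + rr))))
              = (A i * ((cp i).1 ^ jj * (cp i).2 ^ (d - m - jj)))
                * (κ rr * ((cp i).1 ^ rr * (cp i).2 ^ (m - rr))) := by
          intro rr hrr
          have hrr' : rr ≤ m := by
            have := Finset.mem_range.1 hrr
            omega
          rw [pow_add, show d - (jj + rr) = (d - m - jj) + (m - rr) by omega, pow_add]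
          ring
        rw [Finset.sum_congr rfl e, ← Finset.mul_sum, hvan i, mul_zero]
      have hz0 : ∑ rr ∈ Finset.range (m+1),
          κ rr * (∑ i, A i * ((cp i).1 ^ (jj + rr) * (cp i).2 ^ (d - (jj + rr)))) = 0 := by
        calc ∑ rr ∈ Finset.range (m+1),
            κ rr * (∑ i, A i * ((cp i).1 ^ (jj + rr) * (cp i).2 ^ (d - (jj + rr))))
            = ∑ i, ∑ rr ∈ Finset.range (m+1),
                κ rr * (A i * ((cp i).1 ^ (jj + rr) * (cp i).2 ^ (d - (jj + rr)))) := by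
              rw [Finset.sum_congr rfl (fun rr _ => Finset.mul_sum _ _ _), Finset.sum_comm]
          _ = 0 := by
              rw [Finset.sum_congr rfl (fun i _ => hper i)]
              simp
      have hz : ∑ rr ∈ Finset.range (m+1),
          κ rr * ((if jj + rr = r then A' else 0) + (if jj + rr = r + α then B' else 0)) = 0 := by
        calc ∑ rr ∈ Finset.range (m+1),
            κ rr * ((if jj + rr = r then A' else 0) + (if jj + rr = r + α then B' else 0))
            = ∑ rr ∈ Finset.range (m+1),
                κ rr * (∑ i, A i * ((cp i).1 ^ (jj + rr) * (cp i).2 ^ (d - (jj + rr)))) := by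
              refine Finset.sum_congr rfl fun rr hrr => ?_
              rw [hv (jj + rr) (by
                have := Finset.mem_range.1 hrr
                omega)]
          _ = 0 := hz0
      rw [Finset.sum_congr rfl (fun rr (hrr : rr ∈ Finset.range (m+1)) => mul_add (κ rr) _ _),
        Finset.sum_add_distrib, sum_ite_shift m κ hκm jj r A',
        sum_ite_shift m κ hκm jj (r + α) B'] at hz
      exact hz
    have hall := chain_zero κ A' B' hAne hBne r α q m hsq hα2 hm hκm hwin
    exact hr0ne (hall r0)
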